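/- Let B = [[α₁, r, s], [0, α₂, t], [0, 0, α₃]] ∈ ℂ^{3×3} with r·s·t ≠ 0, and let F be the set of λ ∈ ℂ such that the smallest eigenvalue of the Hermitian matrix (λI − B)ᴴ(λI − B) has multiplicity at least 2 (i.e., the two smallest of its three eigenvalues, counted with multiplicity, are equal). Then F contains at most one point, and every λ ∈ F satisfies λ ≠ α₂ and arg(α₂ − λ) = arg(r·conj(s)·t); equivalently, there exists a real ρ > 0 with α₂ − λ = ρ·(r·conj(s)·t). -/

import Mathlib

open Matrix

/-- The eigenvalues (squares of the singular values) of `λI - B`, i.e. the eigenvalues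
of the Hermitian matrix `(λI - B)ᴴ (λI - B)`, counted with multiplicity. -/
noncomputable def sqSingVals {n : ℕ} (B : Matrix (Fin n) (Fin n) ℂ) (lam : ℂ) :
    Fin n → ℝ :=
  (Matrix.isHermitian_conjTranspose_mul_self
    (lam • (1 : Matrix (Fin n) (Fin n) ℂ) - B)).eigenvalues

/-- The smallest eigenvalue of `(λI - B)ᴴ (λI - B)` has multiplicity at least 2:
it is attained at two distinct indices. -/
def SmallestEigMultTwo {n : ℕ} (B : Matrix (Fin n) (Fin n) ℂ) (lam : ℂ) : Prop :=
  ∃ i j : Fin n, i ≠ j ∧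
    sqSingVals B lam i = (⨅ r, sqSingVals B lam r) ∧
    sqSingVals B lam j = (⨅ r, sqSingVals B lam r)

open Complex

lemma fin3_sum {i j : Fin 3} (hij : i ≠ j) :
    ∃ k : Fin 3, k ≠ i ∧ k ≠ j ∧ ∀ f : Fin 3 → ℂ, (∑ m, f m) = f i + f j + f k := by
  have hval : i.val ≠ j.val := Fin.val_ne_of_ne hij
  have h3 : (3:ℕ) - i.val - j.val < 3 := by omega
  refine ⟨⟨3 - i.val - j.val, h3⟩, by simp [Fin.ext_iff]; omega, by simp [Fin.ext_iff]; omega, ?_⟩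
  intro f
  have hnm1 : i ∉ ({j, ⟨3 - i.val - j.val, h3⟩} : Finset (Fin 3)) := by
    simp [Fin.ext_iff]; omega
  have hnm2 : j ∉ ({⟨3 - i.val - j.val, h3⟩} : Finset (Fin 3)) := by
    simp [Fin.ext_iff]; omega
  have huniv : (Finset.univ : Finset (Fin 3)) = {i, j, ⟨3 - i.val - j.val, h3⟩} := by
    symm
    apply Finset.eq_univ_of_card
    rw [Finset.card_insert_of_notMem hnm1, Finset.card_insert_of_notMem hnm2,
      Finset.card_singleton]
    rfl
  rw [huniv, Finset.sum_insert hnm1, Finset.sum_insert hnm2, Finset.sum_singleton, add_assoc]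

lemma stepA {A : Matrix (Fin 3) (Fin 3) ℂ} (hA : A.IsHermitian)
    {i j : Fin 3} (hij : i ≠ j)
    (hi : hA.eigenvalues i = ⨅ m, hA.eigenvalues m)
    (hj : hA.eigenvalues j = ⨅ m, hA.eigenvalues m) :
    ∃ v : Fin 3 → ℂ, ∀ p q : Fin 3,
      A p q = ((⨅ m, hA.eigenvalues m : ℝ) : ℂ) * (1 : Matrix (Fin 3) (Fin 3) ℂ) p q
        + v p * (starRingEnd ℂ) (v q) := by
  set e := hA.eigenvalues with he
  set μ : ℝ := ⨅ m, e m with hμ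
  obtain ⟨k, hki, hkj, hsum⟩ := fin3_sum hij
  set U : Matrix (Fin 3) (Fin 3) ℂ := (hA.eigenvectorUnitary : Matrix (Fin 3) (Fin 3) ℂ) with hUdef
  have hU1 : U * star U = 1 := (Matrix.mem_unitaryGroup_iff).mp hA.eigenvectorUnitary.2
  have hd : 0 ≤ e k - μ := sub_nonneg.2 (ciInf_le (Finite.bddBelow_range e) k)
  refine ⟨fun p => (Real.sqrt (e k - μ) : ℂ) * U p k, ?_⟩
  intro p q
  have hAentry : A p q = ∑ m, (e m : ℂ) * (U p m * (starRingEnd ℂ) (U q m)) := by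
    conv_lhs => rw [hA.spectral_theorem, Unitary.conjStarAlgAut_apply, mul_assoc]
    rw [Matrix.mul_apply]
    refine Finset.sum_congr rfl fun m _ => ?_
    rw [Matrix.diagonal_mul]
    simp only [Matrix.star_apply, Complex.star_def, Function.comp_apply, RCLike.ofReal_alg,
      Complex.real_smul, mul_one]
    ring
  have hone : (1 : Matrix (Fin 3) (Fin 3) ℂ) p q = ∑ m, U p m * (starRingEnd ℂ) (U q m) := by
    rw [← hU1, Matrix.mul_apply]
    refine Finset.sum_congr rfl fun m _ => ?_
    simp [Matrix.star_apply, Complex.star_def]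
  have hsq : (Real.sqrt (e k - μ) : ℂ) * (starRingEnd ℂ) (Real.sqrt (e k - μ) : ℂ)
      = ((e k : ℝ) : ℂ) - (μ : ℂ) := by
    rw [Complex.conj_ofReal, ← Complex.ofReal_mul, Real.mul_self_sqrt hd]
    push_cast; ring
  rw [hAentry, hone, Finset.mul_sum,
    hsum (fun m => (e m : ℂ) * (U p m * (starRingEnd ℂ) (U q m))),
    hsum (fun m => (μ : ℂ) * (U p m * (starRingEnd ℂ) (U q m))), hi, hj]
  simp only [_root_.map_mul]
  linear_combination (-(U p k * (starRingEnd ℂ) (U q k))) * hsq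

lemma lagrange (r b s t : ℂ) :
    (normSq r + normSq b) * (normSq s + normSq t)
      = normSq ((starRingEnd ℂ) r * s - (starRingEnd ℂ) b * t) + normSq (r*t + b*s) := by
  simp only [Complex.normSq_apply, Complex.mul_re, Complex.mul_im, Complex.sub_re,
    Complex.sub_im, Complex.add_re, Complex.add_im, Complex.conj_re, Complex.conj_im]
  ring

lemma normSq_expand (z w : ℂ) (ρ : ℝ) :
    normSq (z - (ρ:ℂ) * w) = normSq z - 2*ρ*(z * (starRingEnd ℂ) w).re + ρ^2 * normSq w := by
  simp only [Complex.normSq_apply, Complex.mul_re, Complex.mul_im, Complex.sub_re,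
    Complex.sub_im, Complex.conj_re, Complex.conj_im, Complex.ofReal_re, Complex.ofReal_im]
  ring

lemma key (α₁ α₂ α₃ r s t : ℂ) (hr : r ≠ 0) (hs : s ≠ 0) (ht : t ≠ 0) (lam : ℂ)
    (h : SmallestEigMultTwo !![α₁,r,s;0,α₂,t;0,0,α₃] lam) :
    ∃ ρ : ℝ, 0 < ρ ∧ α₂ - lam = (ρ:ℂ) * (r * (starRingEnd ℂ) s * t) ∧
      ρ * (normSq r * normSq s - normSq r * normSq t
           + 2*((α₂-α₁) * (starRingEnd ℂ) (r * (starRingEnd ℂ) s * t)).re)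
        = normSq (α₂-α₁) + normSq r := by
  obtain ⟨i, j, hij, hi, hj⟩ := h
  set B : Matrix (Fin 3) (Fin 3) ℂ := !![α₁,r,s;0,α₂,t;0,0,α₃] with hB
  set M : Matrix (Fin 3) (Fin 3) ℂ := lam • (1 : Matrix (Fin 3) (Fin 3) ℂ) - B with hMdef
  have hM : M = !![lam-α₁, -r, -s; 0, lam-α₂, -t; 0, 0, lam-α₃] := by
    rw [hMdef, hB]
    ext p q
    fin_cases p <;> fin_cases q <;> simp [Matrix.one_apply, Matrix.vecHead, Matrix.vecTail]
  obtain ⟨v, hv0⟩ := stepA (Matrix.isHermitian_conjTranspose_mul_self M) hij hi hj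
  set μ : ℝ := ⨅ m, sqSingVals B lam m with hμdef
  have hμ0 : 0 ≤ μ := by
    rw [← hi]
    exact Matrix.eigenvalues_conjTranspose_mul_self_nonneg M i
  have hv : ∀ p q, (Mᴴ * M) p q
      = (μ : ℂ) * (1 : Matrix (Fin 3) (Fin 3) ℂ) p q + v p * (starRingEnd ℂ) (v q) := hv0
  simp only [hM] at hv
  have E11 := hv 0 0
  have E12 := hv 0 1
  have E13 := hv 0 2
  have E22 := hv 1 1
  have E23 := hv 1 2
  have E33 := hv 2 2
  simp [Matrix.mul_apply, Fin.sum_univ_three, Matrix.conjTranspose_apply,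
    Matrix.one_apply, Matrix.vecHead, Matrix.vecTail, ← map_sub,
    ← sub_eq_add_neg] at E11 E12 E13 E22 E23 E33
  set a : ℂ := lam - α₁ with hadef
  set b : ℂ := lam - α₂ with hbdef
  set c : ℂ := lam - α₃ with hcdef
  set na := normSq a
  set nb := normSq b
  set nc := normSq c
  set nr := normSq r
  set ns := normSq s
  set nt := normSq t
  set x := normSq (v 0) with hxdef
  set n1 := normSq (v 1) with h1def
  set n2 := normSq (v 2) with h2def
  have mc : ∀ z : ℂ, (starRingEnd ℂ) z * z = (normSq z : ℂ) := fun z => by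
    rw [mul_comm, mul_conj]
  -- real equations
  have R11 : na = μ + x := by
    have h := E11
    rw [mc a, mul_conj] at h
    exact_mod_cast h
  have R22 : nr + nb = μ + n1 := by
    have h := E22
    rw [mc r, mc b, mul_conj] at h
    exact_mod_cast h
  have R33 : ns + nt + nc = μ + n2 := by
    have h := E33
    rw [mc s, mc t, mc c, mul_conj] at h
    exact_mod_cast h
  have RB : x * n1 = na * nr := by
    have h := congrArg normSq E12
    simp only [Complex.normSq_mul, Complex.normSq_neg, Complex.normSq_conj] at h
    linear_combination -h
  have RC : x * n2 = na * ns := by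
    have h := congrArg normSq E13
    simp only [Complex.normSq_mul, Complex.normSq_neg, Complex.normSq_conj] at h
    linear_combination -h
  have cE12 : -(a * (starRingEnd ℂ) r) = (starRingEnd ℂ) (v 0) * v 1 := by
    have h := congrArg (starRingEnd ℂ) E12
    simpa only [map_neg, _root_.map_mul, Complex.conj_conj] using h
  have hxC : (x:ℂ) = v 0 * (starRingEnd ℂ) (v 0) := (mul_conj _).symm
  have hnaC : (na:ℂ) = (starRingEnd ℂ) a * a := (mc a).symm
  have k1 : (x:ℂ) * (v 1 * (starRingEnd ℂ) (v 2)) = (na:ℂ) * ((starRingEnd ℂ) r * s) := by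
    calc (x:ℂ) * (v 1 * (starRingEnd ℂ) (v 2))
        = ((starRingEnd ℂ) (v 0) * v 1) * (v 0 * (starRingEnd ℂ) (v 2)) := by rw [hxC]; ring
      _ = (-(a * (starRingEnd ℂ) r)) * (-((starRingEnd ℂ) a * s)) := by rw [← cE12, ← E13]
      _ = ((starRingEnd ℂ) a * a) * ((starRingEnd ℂ) r * s) := by ring
      _ = (na:ℂ) * ((starRingEnd ℂ) r * s) := by rw [← hnaC]
  have hnaC2 : (na:ℂ) = (μ:ℂ) + (x:ℂ) := by exact_mod_cast R11
  have hstar : (x:ℂ) * ((starRingEnd ℂ) b * t) = -(μ:ℂ) * ((starRingEnd ℂ) r * s) := by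
    linear_combination -(x:ℂ) * E23 - k1 - ((starRingEnd ℂ) r * s) * hnaC2
  have hnr : 0 < nr := Complex.normSq_pos.mpr hr
  have hns : 0 < ns := Complex.normSq_pos.mpr hs
  have hnt : 0 < nt := Complex.normSq_pos.mpr ht
  have hgoal2 : α₂ - lam = -b := by rw [hbdef]; ring
  by_cases hx0 : x = 0
  · -- degenerate case : v 0 = 0, a = 0, mu = 0
    have hv0z : v 0 = 0 := normSq_eq_zero.mp hx0
    have ha : a = 0 := by
      have h := E12
      rw [hv0z, zero_mul] at h
      rcases mul_eq_zero.mp (neg_eq_zero.mp h) with h' | h'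
      · have := congrArg (starRingEnd ℂ) h'
        simpa using this
      · exact absurd h' hr
    have hna0 : na = 0 := by rw [show na = normSq a from rfl, ha]; simp
    have hmuz : μ = 0 := by
      have h := R11; rw [hna0, hx0] at h; linarith
    have RE23 : normSq ((starRingEnd ℂ) r * s - (starRingEnd ℂ) b * t) = n1 * n2 := by
      have h := congrArg normSq E23
      simpa only [Complex.normSq_mul, Complex.normSq_conj] using h
    have hlag := lagrange r b s t
    have hn1 : n1 = nr + nb := by rw [hmuz] at R22; linarith
    have hn2 : n2 = ns + nt + nc := by rw [hmuz] at R33; linarith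
    have hnb0 : (0:ℝ) ≤ nb := Complex.normSq_nonneg b
    have hnc0 : (0:ℝ) ≤ nc := Complex.normSq_nonneg c
    have hrtbs0 : (0:ℝ) ≤ normSq (r*t + b*s) := Complex.normSq_nonneg _
    have hkey : normSq (r*t + b*s) = 0 := by
      have h0 : normSq (r*t+b*s) = -((nr + nb) * nc) := by
        rw [hn1, hn2] at RE23
        linear_combination -RE23 - hlag
      have hm : (0:ℝ) ≤ (nr + nb) * nc :=
        mul_nonneg (add_nonneg hnr.le hnb0) hnc0
      linarith
    have hrtbs : r * t + b * s = 0 := normSq_eq_zero.mp hkey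
    have hnsC : (ns:ℂ) = (starRingEnd ℂ) s * s := (mc s).symm
    have hdir : α₂ - lam = ((ns⁻¹ : ℝ):ℂ) * (r * (starRingEnd ℂ) s * t) := by
      rw [hgoal2]
      push_cast
      rw [inv_mul_eq_div, eq_div_iff (by exact_mod_cast hns.ne')]
      linear_combination -(starRingEnd ℂ) s * hrtbs - b * hnsC
    refine ⟨ns⁻¹, by positivity, hdir, ?_⟩
    obtain ⟨p, hp⟩ : ∃ p : ℝ, p = ns⁻¹ := ⟨_, rfl⟩
    rw [← hp]
    have hpns : p * ns = 1 := by rw [hp]; exact inv_mul_cancel₀ hns.ne'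
    have hpC : ((p:ℝ):ℂ) = ((ns⁻¹:ℝ):ℂ) := by rw [hp]
    have h2 : x = p * nr * ns - nr := by
      rw [hx0]; linear_combination -nr * hpns
    have haeq : a = (α₂ - α₁) - ((p:ℝ):ℂ) * (r * (starRingEnd ℂ) s * t) := by
      linear_combination hadef - hdir + (r * (starRingEnd ℂ) s * t) * hpC
    have h4 : na = normSq (α₂-α₁)
        - 2*p*((α₂-α₁) * (starRingEnd ℂ) (r * (starRingEnd ℂ) s * t)).re
        + p^2 * (nr*ns*nt) := by
      rw [show na = normSq a from rfl, haeq, normSq_expand]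
      simp only [Complex.normSq_mul, Complex.normSq_conj]
      try ring
    have h3 : μ = p * (x * nt) := by rw [hmuz, hx0]; ring
    linear_combination h4 - R11 - h3 - (1 + p*nt) * h2
  · -- main case : x > 0
    have hxpos : 0 < x := lt_of_le_of_ne (Complex.normSq_nonneg _) (Ne.symm hx0)
    have hmupos : 0 < μ := by
      rcases lt_or_eq_of_le hμ0 with h | h
      · exact h
      · exfalso
        have hmuz : μ = 0 := h.symm
        have hbz : b = 0 := by
          rw [hmuz] at hstar
          simp only [Complex.ofReal_zero, neg_zero, zero_mul] at hstar
          rcases mul_eq_zero.mp hstar with h' | h'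
          · exact absurd (by exact_mod_cast h' : (x:ℝ) = 0) hx0
          · rcases mul_eq_zero.mp h' with h'' | h''
            · have := congrArg (starRingEnd ℂ) h''
              simpa using this
            · exact absurd h'' ht
        have hnax : na = x := by rw [hmuz] at R11; linarith
        have hn2 : n2 = ns := by
          have hcc : x * n2 = x * ns := by rw [RC, hnax]
          exact mul_left_cancel₀ hx0 hcc
        rw [hmuz, hn2] at R33
        have hncnn : 0 ≤ nc := Complex.normSq_nonneg c
        linarith
    obtain ⟨ρ, hρdef⟩ : ∃ p : ℝ, p = μ / (x * nt) := ⟨_, rfl⟩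
    have hxnt : x * nt ≠ 0 := by positivity
    have hρpos : 0 < ρ := by rw [hρdef]; exact div_pos hmupos (by positivity)
    have hμeq : μ = ρ * (x * nt) := by
      rw [hρdef, div_mul_cancel₀ _ hxnt]
    have hntC : (nt:ℂ) = t * (starRingEnd ℂ) t := (mul_conj t).symm
    have hb2 : ((x*nt:ℝ):ℂ) * (starRingEnd ℂ) b
        = -(μ:ℂ) * ((starRingEnd ℂ) r * s * (starRingEnd ℂ) t) := by
      have h := congrArg (· * (starRingEnd ℂ) t) hstar
      push_cast
      linear_combination h + (x:ℂ) * (starRingEnd ℂ) b * hntC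
    have hb3 : ((x*nt:ℝ):ℂ) * b = -(μ:ℂ) * (r * (starRingEnd ℂ) s * t) := by
      have h := congrArg (starRingEnd ℂ) hb2
      simpa only [_root_.map_mul, map_neg, Complex.conj_conj, Complex.conj_ofReal] using h
    have hdir : α₂ - lam = (ρ:ℂ) * (r * (starRingEnd ℂ) s * t) := by
      rw [hgoal2, hρdef]
      push_cast
      rw [div_mul_eq_mul_div, eq_div_iff (by exact_mod_cast hxnt)]
      push_cast at hb3
      linear_combination -hb3
    refine ⟨ρ, hρpos, hdir, ?_⟩
    have hbeq : b = -((ρ:ℝ):ℂ) * (r * (starRingEnd ℂ) s * t) := by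
      linear_combination hbdef - hdir
    have hnb : nb = ρ^2 * (nr*ns*nt) := by
      rw [show nb = normSq b from rfl, hbeq]
      simp only [Complex.normSq_mul, Complex.normSq_neg, Complex.normSq_conj,
        Complex.normSq_ofReal]
      try ring
    have key1 : x * nb = μ * (x + nr) := by
      linear_combination RB + x * R22 + nr * R11
    have h2 : x = ρ * nr * ns - nr := by
      have hcanc : (ρ * (x * nt)) * x = (ρ * (x * nt)) * (ρ * nr * ns - nr) := by
        linear_combination -key1 + x * hnb - (x + nr) * hμeq
      exact mul_left_cancel₀ (by positivity) hcanc
    have haeq : a = (α₂ - α₁) - ((ρ:ℝ):ℂ) * (r * (starRingEnd ℂ) s * t) := by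
      linear_combination hadef - hdir
    have h4 : na = normSq (α₂-α₁)
        - 2*ρ*((α₂-α₁) * (starRingEnd ℂ) (r * (starRingEnd ℂ) s * t)).re
        + ρ^2 * (nr*ns*nt) := by
      rw [show na = normSq a from rfl, haeq, normSq_expand]
      simp only [Complex.normSq_mul, Complex.normSq_conj]
      try ring
    linear_combination h4 - R11 - hμeq - (1 + ρ*nt) * h2


/-- For `B = [[α₁, r, s], [0, α₂, t], [0, 0, α₃]]` with `r·s·t ≠ 0`, the set `F` of
`λ` at which the smallest singular value of `λI - B` is multiple contains at most one
point, and any such `λ` satisfies `α₂ - λ = ρ·(r·conj s·t)` for some real `ρ > 0`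
(in particular `λ ≠ α₂` and `arg (α₂ - λ) = arg (r·conj s·t)`). -/
theorem essential_fault_point_three_by_three
    (α₁ α₂ α₃ r s t : ℂ) (hrst : r * s * t ≠ 0) :
    ({lam : ℂ | SmallestEigMultTwo !![α₁, r, s; 0, α₂, t; 0, 0, α₃] lam}).Subsingleton ∧
    ∀ lam : ℂ, SmallestEigMultTwo !![α₁, r, s; 0, α₂, t; 0, 0, α₃] lam →
      ∃ ρ : ℝ, 0 < ρ ∧ α₂ - lam = (ρ : ℂ) * (r * (starRingEnd ℂ) s * t) := by
  have hr : r ≠ 0 := fun h => hrst (by rw [h]; ring)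
  have hs : s ≠ 0 := fun h => hrst (by rw [h]; ring)
  have ht : t ≠ 0 := fun h => hrst (by rw [h]; ring)
  constructor
  · intro lam hlam lam' hlam'
    obtain ⟨ρ, hρ, hd, hK⟩ := key α₁ α₂ α₃ r s t hr hs ht lam hlam
    obtain ⟨ρ', hρ', hd', hK'⟩ := key α₁ α₂ α₃ r s t hr hs ht lam' hlam'
    have hCpos : 0 < normSq (α₂-α₁) + normSq r :=
      add_pos_of_nonneg_of_pos (Complex.normSq_nonneg _) (Complex.normSq_pos.mpr hr)
    have hKne : normSq r * normSq s - normSq r * normSq t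
        + 2*((α₂-α₁) * (starRingEnd ℂ) (r * (starRingEnd ℂ) s * t)).re ≠ 0 := by
      intro h0
      rw [h0, mul_zero] at hK
      exact absurd hK.symm hCpos.ne'
    have hρρ : ρ = ρ' := mul_right_cancel₀ hKne (hK.trans hK'.symm)
    have : α₂ - lam = α₂ - lam' := by
      rw [hd, hd', hρρ]
    exact sub_right_injective this
  · intro lam hlam
    obtain ⟨ρ, h1, h2, _⟩ := key α₁ α₂ α₃ r s t hr hs ht lam hlam
    exact ⟨ρ, h1, h2⟩
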